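/- Let n₊, μ₊, n₋, μ₋, t be an edge configuration with ⟨n₊,n₋⟩ ≠ −1, and let a, b ∈ ℝ³ satisfy ⟨a, n₊⟩ = 0 and ⟨b, n₋⟩ = 0. Then the co-normal continuity condition a = P_{n₋→n₊}(−b) holds if and only if ⟨μ₊, a⟩ = ⟨μ₋, b⟩ and ⟨t, a⟩ = −⟨t, b⟩. -/

import Mathlib

open scoped InnerProductSpace

noncomputable section
open Classical

abbrev E3 : Type := EuclideanSpace ℝ (Fin 3)

/-- Cross product on `E3`. -/
def cross3 (a b : E3) : E3 :=
  (EuclideanSpace.equiv (Fin 3) ℝ).symm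
    (crossProduct ((EuclideanSpace.equiv (Fin 3) ℝ) a) ((EuclideanSpace.equiv (Fin 3) ℝ) b))

/-- Geodesic distance on the unit sphere. -/
def sphDist (n₁ n₂ : E3) : ℝ := Real.arccos ⟪n₁, n₂⟫_ℝ

/-- The logarithmic map of the unit sphere. -/
def sphLog (n₁ n₂ : E3) : E3 :=
  if n₂ = n₁ then 0
  else (Real.arccos ⟪n₁, n₂⟫_ℝ / ‖n₂ - ⟪n₁, n₂⟫_ℝ • n₁‖) • (n₂ - ⟪n₁, n₂⟫_ℝ • n₁)

/-- Parallel transport along the shortest geodesic of the unit sphere. -/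
def ptrans (n₁ n₂ ξ : E3) : E3 :=
  ξ - (⟪ξ, n₂⟫_ℝ / (1 + ⟪n₂, n₁⟫_ℝ)) • (n₂ + n₁)

lemma inner_eq_dot (x y : E3) :
    ⟪x, y⟫_ℝ = dotProduct (x : Fin 3 → ℝ) (y : Fin 3 → ℝ) := by
  simp [PiLp.inner_apply, dotProduct, mul_comm, RCLike.inner_apply]

lemma cross3_coe (a b : E3) :
    (cross3 a b : Fin 3 → ℝ) = crossProduct (a : Fin 3 → ℝ) (b : Fin 3 → ℝ) := rfl

lemma inner_cross3_cross3 (u v w x : E3) :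
    ⟪cross3 u v, cross3 w x⟫_ℝ = ⟪u, w⟫_ℝ * ⟪v, x⟫_ℝ - ⟪u, x⟫_ℝ * ⟪v, w⟫_ℝ := by
  simp only [inner_eq_dot, cross3_coe]
  exact cross_dot_cross _ _ _ _

lemma inner_self_cross3 (v w : E3) : ⟪v, cross3 v w⟫_ℝ = 0 := by
  simp only [inner_eq_dot, cross3_coe]; exact dot_self_cross _ _

lemma inner_cross3_self (v w : E3) : ⟪w, cross3 v w⟫_ℝ = 0 := by
  simp only [inner_eq_dot, cross3_coe]; exact dot_cross_self _ _

lemma cross3_smul_left (r : ℝ) (x y : E3) : cross3 (r • x) y = r • cross3 x y := by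
  have h : ((r • x : E3) : Fin 3 → ℝ) = r • (x : Fin 3 → ℝ) := rfl
  simp [cross3, h, map_smul]

lemma cross3_smul_right (r : ℝ) (x y : E3) : cross3 x (r • y) = r • cross3 x y := by
  have h : ((r • y : E3) : Fin 3 → ℝ) = r • (y : Fin 3 → ℝ) := rfl
  simp [cross3, h, map_smul]

lemma cross3_add_left (x y z : E3) : cross3 (x + y) z = cross3 x z + cross3 y z := by
  have h : ((x + y : E3) : Fin 3 → ℝ) = (x : Fin 3 → ℝ) + y := rfl
  simp [cross3, h, map_add]

lemma cross3_add_right (x y z : E3) : cross3 x (y + z) = cross3 x y + cross3 x z := by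
  have h : ((y + z : E3) : Fin 3 → ℝ) = (y : Fin 3 → ℝ) + z := rfl
  simp [cross3, h, map_add]

lemma cross3_self (x : E3) : cross3 x x = 0 := by
  have h : (cross3 x x : Fin 3 → ℝ) = 0 := by rw [cross3_coe]; exact cross_self _
  exact WithLp.ofLp_injective 2 h

lemma cross3_anticomm (x y : E3) : cross3 x y = - cross3 y x := by
  have h : (cross3 x y : Fin 3 → ℝ) = -(cross3 y x : Fin 3 → ℝ) := by
    rw [cross3_coe, cross3_coe, ← cross_anticomm]
  exact WithLp.ofLp_injective 2 h

lemma onb_expand (e₀ e₁ e₂ : E3) (h : Orthonormal ℝ ![e₀, e₁, e₂]) (v : E3) :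
    v = ⟪e₀, v⟫_ℝ • e₀ + ⟪e₁, v⟫_ℝ • e₁ + ⟪e₂, v⟫_ℝ • e₂ := by
  have hcard : Fintype.card (Fin 3) = Module.finrank ℝ E3 := by simp
  let B := (basisOfOrthonormalOfCardEqFinrank h hcard).toOrthonormalBasis
    (by rw [coe_basisOfOrthonormalOfCardEqFinrank]; exact h)
  have hB : ∀ i, B i = ![e₀, e₁, e₂] i := by
    intro i
    simp [B, Module.Basis.coe_toOrthonormalBasis, coe_basisOfOrthonormalOfCardEqFinrank]
  have h2 := B.sum_repr' v
  rw [Fin.sum_univ_three, hB 0, hB 1, hB 2] at h2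
  simpa using h2.symm

theorem co_normal_continuity_characterization (np μp nm μm t : E3)
    (hnp : ‖np‖ = 1) (hμp : ‖μp‖ = 1) (hnm : ‖nm‖ = 1) (hμm : ‖μm‖ = 1) (ht : ‖t‖ = 1)
    (hcp : cross3 np μp = t) (hcm : cross3 nm μm = -t)
    (hne : ⟪np, nm⟫_ℝ ≠ -1)
    (a b : E3) (ha : ⟪a, np⟫_ℝ = 0) (hb : ⟪b, nm⟫_ℝ = 0) :
    a = ptrans nm np (-b) ↔ (⟪μp, a⟫_ℝ = ⟪μm, b⟫_ℝ ∧ ⟪t, a⟫_ℝ = -⟪t, b⟫_ℝ) := by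
  -- self inner products
  have inp : ⟪np, np⟫_ℝ = 1 := by rw [real_inner_self_eq_norm_sq, hnp]; norm_num
  have iμp : ⟪μp, μp⟫_ℝ = 1 := by rw [real_inner_self_eq_norm_sq, hμp]; norm_num
  have inm : ⟪nm, nm⟫_ℝ = 1 := by rw [real_inner_self_eq_norm_sq, hnm]; norm_num
  have iμm : ⟪μm, μm⟫_ℝ = 1 := by rw [real_inner_self_eq_norm_sq, hμm]; norm_num
  have itt : ⟪t, t⟫_ℝ = 1 := by rw [real_inner_self_eq_norm_sq, ht]; norm_num
  -- orthogonality on the + side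
  have hnpμp : ⟪np, μp⟫_ℝ = 0 := by
    have h := inner_cross3_cross3 np μp np μp
    rw [hcp, itt, inp, iμp, real_inner_comm np μp] at h
    exact mul_self_eq_zero.mp (by linarith)
  have hnpt : ⟪np, t⟫_ℝ = 0 := by rw [← hcp]; exact inner_self_cross3 _ _
  have hμpt : ⟪μp, t⟫_ℝ = 0 := by rw [← hcp]; exact inner_cross3_self _ _
  have hμpnp : ⟪μp, np⟫_ℝ = 0 := by rw [real_inner_comm]; exact hnpμp
  have htnp : ⟪t, np⟫_ℝ = 0 := by rw [real_inner_comm]; exact hnpt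
  have htμp : ⟪t, μp⟫_ℝ = 0 := by rw [real_inner_comm]; exact hμpt
  -- orthogonality on the - side
  have hnmμm : ⟪nm, μm⟫_ℝ = 0 := by
    have h := inner_cross3_cross3 nm μm nm μm
    rw [hcm, inner_neg_neg, itt, inm, iμm, real_inner_comm nm μm] at h
    exact mul_self_eq_zero.mp (by linarith)
  have hnmt : ⟪nm, t⟫_ℝ = 0 := by
    have h := inner_self_cross3 nm μm
    rw [hcm, inner_neg_right] at h
    linarith
  have hμmt : ⟪μm, t⟫_ℝ = 0 := by
    have h := inner_cross3_self nm μm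
    rw [hcm, inner_neg_right] at h
    linarith
  -- orthonormal basis {np, μp, t}
  have hON : Orthonormal ℝ ![np, μp, t] := by
    rw [orthonormal_iff_ite]
    intro i j
    fin_cases i <;> fin_cases j <;>
      simp [inp, iμp, itt, hnpμp, hnpt, hμpt, hμpnp, htnp, htμp, -PiLp.inner_apply, hnp, hμp, ht]
  -- notation
  set c : ℝ := ⟪np, nm⟫_ℝ with hc
  set s : ℝ := ⟪μp, nm⟫_ℝ with hs
  have h1c : (1 : ℝ) + c ≠ 0 := fun h => hne (by linarith)
  have htnm : ⟪t, nm⟫_ℝ = 0 := by rw [real_inner_comm]; exact hnmt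
  have htμm : ⟪t, μm⟫_ℝ = 0 := by rw [real_inner_comm]; exact hμmt
  -- expansion of nm
  have hnm_exp : nm = c • np + s • μp := by
    have h := onb_expand np μp t hON nm
    rw [htnm, zero_smul, add_zero, ← hc, ← hs] at h
    exact h
  -- c² + s² = 1
  have hcs : c * c + s * s = 1 := by
    have h : ⟪nm, nm⟫_ℝ = c * c + s * s := by
      nth_rw 2 [hnm_exp]
      rw [inner_add_right, real_inner_smul_right, real_inner_smul_right,
        real_inner_comm np nm, real_inner_comm μp nm, ← hc, ← hs]
    rw [inm] at h; linarith
  -- expansion of μm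
  set α : ℝ := ⟪np, μm⟫_ℝ with hα
  set β : ℝ := ⟪μp, μm⟫_ℝ with hβ
  have hμm_exp : μm = α • np + β • μp := by
    have h := onb_expand np μp t hON μm
    rw [htμm, zero_smul, add_zero, ← hα, ← hβ] at h
    exact h
  -- relation from orthogonality of nm and μm
  have hrel1 : c * α + s * β = 0 := by
    have h : ⟪nm, μm⟫_ℝ = c * α + s * β := by
      nth_rw 1 [hnm_exp]
      rw [inner_add_left, real_inner_smul_left, real_inner_smul_left, ← hα, ← hβ]
    rw [hnmμm] at h; linarith
  -- orientation relation
  have hrel2 : c * β - s * α = -1 := by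
    have h : cross3 nm μm = (c * β - s * α) • t := by
      rw [hnm_exp, hμm_exp, cross3_add_left, cross3_smul_left, cross3_smul_left,
        cross3_add_right, cross3_add_right, cross3_smul_right, cross3_smul_right,
        cross3_smul_right, cross3_smul_right, cross3_self, cross3_self,
        cross3_anticomm μp np, hcp]
      module
    rw [hcm] at h
    have h2 : ⟪t, -t⟫_ℝ = ⟪t, (c * β - s * α) • t⟫_ℝ := by rw [h]
    rw [inner_neg_right, itt, real_inner_smul_right, itt] at h2
    linarith
  have hαs : α = s := by linear_combination c*hrel1 - s*hrel2 - α*hcs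
  have hβc : β = -c := by linear_combination s*hrel1 + c*hrel2 - β*hcs
  -- coefficients of b
  set x : ℝ := ⟪np, b⟫_ℝ with hx
  set y : ℝ := ⟪μp, b⟫_ℝ with hy
  have hbc : c * x + s * y = 0 := by
    have h : ⟪b, nm⟫_ℝ = c * x + s * y := by
      nth_rw 1 [hnm_exp]
      rw [inner_add_right, real_inner_smul_right, real_inner_smul_right,
        real_inner_comm np b, real_inner_comm μp b, ← hx, ← hy]
    rw [hb] at h; linarith
  have hμmb : ⟪μm, b⟫_ℝ = s * x - c * y := by
    nth_rw 1 [hμm_exp]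
    rw [inner_add_left, real_inner_smul_left, real_inner_smul_left, ← hx, ← hy, hαs, hβc]
    ring
  -- the transported vector
  have hxb : ⟪-b, np⟫_ℝ = -x := by rw [inner_neg_left, real_inner_comm, ← hx]
  have hPdef : ptrans nm np (-b) = -b - ((-x) / (1 + c)) • (np + nm) := by
    rw [ptrans, hxb, ← hc]
  have hPnp : ⟪np, ptrans nm np (-b)⟫_ℝ = 0 := by
    rw [hPdef, inner_sub_right, inner_neg_right, real_inner_smul_right,
      inner_add_right, inp, ← hc, ← hx]
    field_simp
    ring
  have hPμ : ⟪μp, ptrans nm np (-b)⟫_ℝ = -y + x * s / (1 + c) := by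
    rw [hPdef, inner_sub_right, inner_neg_right, real_inner_smul_right,
      inner_add_right, hμpnp, ← hs, ← hy]
    ring
  have hPt : ⟪t, ptrans nm np (-b)⟫_ℝ = -⟪t, b⟫_ℝ := by
    rw [hPdef, inner_sub_right, inner_neg_right, real_inner_smul_right,
      inner_add_right, htnp, htnm]
    ring
  -- key scalar identity
  have hkey : -y + x * s / (1 + c) = s * x - c * y := by
    have h : (-y + x * s / (1 + c)) * (1 + c) = (s * x - c * y) * (1 + c) := by
      have hd : x * s / (1 + c) * (1 + c) = x * s := div_mul_cancel₀ _ h1c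
      rw [add_mul, hd]
      linear_combination (-s) * hbc + y * hcs
    exact mul_right_cancel₀ h1c h
  -- expansions of a and of the transported vector
  have hnpa : ⟪np, a⟫_ℝ = 0 := by rw [real_inner_comm]; exact ha
  have ha_exp : a = ⟪μp, a⟫_ℝ • μp + ⟪t, a⟫_ℝ • t := by
    have h := onb_expand np μp t hON a
    rw [hnpa, zero_smul, zero_add] at h; exact h
  have hP_exp : ptrans nm np (-b)
      = ⟪μp, ptrans nm np (-b)⟫_ℝ • μp + ⟪t, ptrans nm np (-b)⟫_ℝ • t := by
    have h := onb_expand np μp t hON (ptrans nm np (-b))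
    rw [hPnp, zero_smul, zero_add] at h; exact h
  constructor
  · intro h
    refine ⟨?_, ?_⟩
    · rw [h, hPμ, hμmb]; exact hkey
    · rw [h, hPt]
  · rintro ⟨h1, h2⟩
    rw [ha_exp, hP_exp, hPμ, hPt, h1, hμmb, ← hkey, h2]
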